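/- arXiv:1305.4263 — 3 statements merged into one kernel-verified Lean document; each statement's English description precedes it below -/
import Mathlib

section
/- Let d be a positive integer, K = d² + 1, and X = {1, ..., K}. Define labels as pairs (z, A) with z ∈ X and A ⊆ X, |A| ≤ d. Define (z, A) ≺ (z', A') iff z ∈ A' and z' ∉ A. For labels l_1 = (s_1, A_1), ..., l_r = (s_r, A_r) with r ≤ d, let s = min(X \ (A_1 ∪ ... ∪ A_r)) and A = {s_1, ..., s_r}, and ν(l_1,...,l_r) = (s, A). Then ν is well-defined (the set X \ (A_1 ∪ ... ∪ A_r) is non-empty, and |A| ≤ d) and for every i with 1 ≤ i ≤ r, l_i ≺ ν(l_1,...,l_r). -/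
/-- The sting-antistings label increment function is well-defined and produces
a label greater than each of its (at most d) arguments. -/
theorem stmt_3 (d : ℕ) (hd : 0 < d) (K : ℕ) (hK : K = d ^ 2 + 1)
    (X : Finset ℕ) (hX : X = Finset.Icc 1 K)
    (r : ℕ) (hr : r ≤ d) (l : Fin r → ℕ × Finset ℕ)
    (hsting : ∀ i, (l i).1 ∈ X) (hanti : ∀ i, (l i).2 ⊆ X)
    (hcard : ∀ i, (l i).2.card ≤ d) :
    let U : Finset ℕ := Finset.univ.biUnion (fun i => (l i).2)
    let s : ℕ := sInf {x : ℕ | x ∈ X \ U}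
    let A : Finset ℕ := Finset.image (fun i => (l i).1) Finset.univ
    (X \ U).Nonempty ∧ A.card ≤ d ∧
      ∀ i, (l i).1 ∈ A ∧ s ∉ (l i).2 := by
  intro U s A
  have hUcard : U.card ≤ r * d := by
    calc U.card ≤ ∑ i : Fin r, (l i).2.card := Finset.card_biUnion_le
    _ ≤ ∑ _i : Fin r, d := Finset.sum_le_sum (fun i _ => hcard i)
    _ = r * d := by simp [Finset.sum_const, mul_comm]
  have hXcard : X.card = K := by
    rw [hX, Nat.card_Icc]; omega
  have hne : (X \ U).Nonempty := by
    have : U.card < X.card := by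
      rw [hXcard, hK]
      have : r * d ≤ d * d := Nat.mul_le_mul_right d hr
      nlinarith
    rw [← Finset.card_pos]
    have := Finset.le_card_sdiff U X
    omega
  refine ⟨hne, ?_, ?_⟩
  · calc A.card ≤ (Finset.univ : Finset (Fin r)).card := Finset.card_image_le
    _ = r := by simp
    _ ≤ d := hr
  · intro i
    constructor
    · exact Finset.mem_image.mpr ⟨i, Finset.mem_univ i, rfl⟩
    · have hs : s ∈ X \ U := by
        have : {x : ℕ | x ∈ X \ U}.Nonempty := ⟨hne.choose, hne.choose_spec⟩
        exact Nat.sInf_mem this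
      have hsU : s ∉ U := (Finset.mem_sdiff.mp hs).2
      intro hmem
      exact hsU (Finset.mem_biUnion.mpr ⟨i, Finset.mem_univ i, hmem⟩)
end

section
/- Let T_λ = (Σ_{μ<λ} R_μ + 1) · (|λ|+1) · (K^cl + 1) · (K + 1), where |λ| is the number of identifiers μ ≤ λ and R_μ = (J_μ+1)(K+1) − 1. Given a sequence of T_λ interrupts where the number of interrupts of type [μ,←] is at most R_μ for each μ < λ, there exists a consecutive subsequence of length (|λ|+1)·(K^cl+1)·(K+1) containing no interrupt of type [μ,←] for any μ < λ; and within it, a consecutive subsequence of length (K^cl+1)·(K+1) containing additionally no interrupt of type [μ,→] (of which there are at most |λ| in the outer subsequence). -/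
open scoped Classical

lemma pigeon_blocks (a b n : ℕ) (hb : 0 < b) (P : ℕ → Prop) [DecidablePred P]
    (h : ((Finset.Icc a (a + n * b - 1)).filter P).card < n) :
    ∃ k < n, ∀ i, a + k * b ≤ i → i ≤ a + k * b + b - 1 → ¬ P i := by
  by_contra hc
  push_neg at hc
  choose f hf1 hf2 hf3 using hc
  have : n ≤ ((Finset.Icc a (a + n * b - 1)).filter P).card := by
    have key := Finset.card_le_card_of_injOn (s := (Finset.univ : Finset (Fin n))) (t := (Finset.Icc a (a + n * b - 1)).filter P)
      (fun k : Fin n => f k k.2) ?hmem ?hinj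
    case _ => simpa using key
    case hmem =>
      intro k _
      have hk' := k.2
      simp only [Finset.mem_coe, Finset.mem_filter, Finset.mem_Icc]
      refine ⟨⟨?_, ?_⟩, hf3 k _⟩
      · exact le_trans (Nat.le_add_right a _) (hf1 k _)
      · have h1 := hf2 k k.2
        have : a + (k : ℕ) * b + b ≤ a + n * b := by
          have : ((k:ℕ)+1) * b ≤ n * b := Nat.mul_le_mul_right b hk'
          nlinarith [this]
        omega
    case hinj =>
      intro k hk l hl hkl
      have h1k := hf1 k k.2
      have h2k := hf2 k k.2
      have h1l := hf1 l l.2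
      have h2l := hf2 l l.2
      simp only at hkl
      have hkn : (k : ℕ) = (l : ℕ) := by
        rcases lt_trichotomy (k : ℕ) (l : ℕ) with h | h | h
        · exfalso
          have hm : ((k:ℕ)+1) * b ≤ (l:ℕ) * b := Nat.mul_le_mul_right b h
          have hr : ((k:ℕ)+1) * b = (k:ℕ)*b + b := by ring
          have he : f (k:ℕ) k.2 + 1 ≤ a + (k:ℕ)*b + b := by
            have := Nat.succ_pred_eq_of_pos (show 0 < a + (k:ℕ)*b + b by positivity)
            omega
          linarith
        · exact h
        · exfalso
          have hm : ((l:ℕ)+1) * b ≤ (k:ℕ) * b := Nat.mul_le_mul_right b h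
          have hr : ((l:ℕ)+1) * b = (l:ℕ)*b + b := by ring
          have he : f (l:ℕ) l.2 + 1 ≤ a + (l:ℕ)*b + b := by
            have := Nat.succ_pred_eq_of_pos (show 0 < a + (l:ℕ)*b + b by positivity)
            omega
          linarith
      exact Fin.ext hkn
  omega

/-- Interrupt types: [μ,←], [μ,→] for identifiers μ < λ, and [λ,max], [λ,cl]. -/
inductive Intr (I : Type*) where
  | left (μ : I)
  | right (μ : I)
  | max
  | cl

/-- Nested pigeonhole on interrupt sequences: in T_λ interrupts with at most
R_μ interrupts [μ,←] for each μ < λ, there is a block of length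
(|λ|+1)(K^cl+1)(K+1) free of [μ,←] interrupts, and inside it (since it contains
at most |λ| interrupts [μ,→]) a block of length (K^cl+1)(K+1) free of both
[μ,←] and [μ,→] interrupts. -/
theorem stmt_18 {I : Type*} (ids : Finset I) (R : I → ℕ) (K Kcl : ℕ)
    (T : ℕ)
    (hT : T = ((∑ μ ∈ ids, R μ) + 1) * (ids.card + 2) * (Kcl + 1) * (K + 1))
    (s : ℕ → Intr I)
    (hids : ∀ i μ, 1 ≤ i → i ≤ T → (s i = Intr.left μ ∨ s i = Intr.right μ) → μ ∈ ids)
    (hleft : ∀ μ ∈ ids,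
      ((Finset.Icc 1 T).filter (fun i => s i = Intr.left μ)).card ≤ R μ)
    (hright : ∀ a b, 1 ≤ a → b ≤ T →
      (∀ i μ, a ≤ i → i ≤ b → s i ≠ Intr.left μ) →
      ((Finset.Icc a b).filter (fun i => ∃ μ, s i = Intr.right μ)).card ≤ ids.card + 1) :
    ∃ i₀, 1 ≤ i₀ ∧ i₀ + (ids.card + 2) * (Kcl + 1) * (K + 1) - 1 ≤ T ∧
      (∀ i μ, i₀ ≤ i → i ≤ i₀ + (ids.card + 2) * (Kcl + 1) * (K + 1) - 1 →
        s i ≠ Intr.left μ) ∧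
      ∃ j₀, i₀ ≤ j₀ ∧
        j₀ + (Kcl + 1) * (K + 1) - 1 ≤ i₀ + (ids.card + 2) * (Kcl + 1) * (K + 1) - 1 ∧
        ∀ i μ, j₀ ≤ i → i ≤ j₀ + (Kcl + 1) * (K + 1) - 1 →
          s i ≠ Intr.left μ ∧ s i ≠ Intr.right μ := by
  classical
  set B := (ids.card + 2) * (Kcl + 1) * (K + 1) with hBdef
  set b := (Kcl + 1) * (K + 1) with hbdef
  set N := (∑ μ ∈ ids, R μ) + 1 with hNdef
  have hb : 0 < b := by positivity
  have hB : 0 < B := by positivity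
  have hBb : B = (ids.card + 2) * b := by rw [hBdef, hbdef]; ring
  have hTNB : T = N * B := by rw [hT, hBdef, hNdef]; ring
  set P : ℕ → Prop := fun i => ∃ μ, s i = Intr.left μ with hPdef
  have hPcard : ((Finset.Icc 1 (1 + N * B - 1)).filter P).card < N := by
    have he : 1 + N * B - 1 = T := by rw [hTNB]; exact Nat.add_sub_cancel_left 1 (N * B)
    rw [he]
    have hsub : (Finset.Icc 1 T).filter P ⊆
        ids.biUnion (fun μ => (Finset.Icc 1 T).filter (fun i => s i = Intr.left μ)) := by
      intro i hi
      rw [Finset.mem_filter, Finset.mem_Icc] at hi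
      obtain ⟨⟨h1, h2⟩, μ, hμ⟩ := hi
      exact Finset.mem_biUnion.2 ⟨μ, hids i μ h1 h2 (Or.inl hμ),
        Finset.mem_filter.2 ⟨Finset.mem_Icc.2 ⟨h1, h2⟩, hμ⟩⟩
    calc ((Finset.Icc 1 T).filter P).card
        ≤ (ids.biUnion (fun μ => (Finset.Icc 1 T).filter
            (fun i => s i = Intr.left μ))).card := Finset.card_le_card hsub
      _ ≤ ∑ μ ∈ ids, ((Finset.Icc 1 T).filter (fun i => s i = Intr.left μ)).card :=
          Finset.card_biUnion_le
      _ ≤ ∑ μ ∈ ids, R μ := Finset.sum_le_sum hleft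
      _ < N := Nat.lt_succ_self _
  obtain ⟨k, hk, hkfree⟩ := pigeon_blocks 1 B N hB P hPcard
  have hkB : k * B + B ≤ T := by
    calc k * B + B = (k + 1) * B := by ring
      _ ≤ N * B := Nat.mul_le_mul_right B hk
      _ = T := hTNB.symm
  set q := k * B with hq
  refine ⟨q + 1, le_add_self, by omega, ?_, ?_⟩
  · intro i μ h1 h2 hL
    exact hkfree i (by omega) (by omega) ⟨μ, hL⟩
  · -- second pigeonhole inside the block
    have hnoleft : ∀ i μ, q + 1 ≤ i → i ≤ q + B → s i ≠ Intr.left μ := by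
      intro i μ h1 h2 hL
      exact hkfree i (by omega) (by omega) ⟨μ, hL⟩
    have hP'card : ((Finset.Icc (q + 1) (q + 1 + (ids.card + 2) * b - 1)).filter
        (fun i => ∃ μ, s i = Intr.right μ)).card < ids.card + 2 := by
      have he : q + 1 + (ids.card + 2) * b - 1 = q + B := by
        rw [← hBb]; omega
      rw [he]
      exact lt_of_le_of_lt (hright (q + 1) (q + B) (by omega) (by omega) hnoleft)
        (Nat.lt_succ_self _)
    obtain ⟨m, hm, hmfree⟩ := pigeon_blocks (q + 1) b (ids.card + 2) hb
      (fun i => ∃ μ, s i = Intr.right μ) hP'card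
    have hmb : m * b + b ≤ B := by
      calc m * b + b = (m + 1) * b := by ring
        _ ≤ (ids.card + 2) * b := Nat.mul_le_mul_right b hm
        _ = B := hBb.symm
    set r := m * b with hr
    refine ⟨q + 1 + r, by omega, by omega, ?_⟩
    intro i μ h1 h2
    constructor
    · exact hnoleft i μ (by omega) (by omega)
    · intro hR
      exact hmfree i (by omega) (by omega) ⟨μ, hR⟩
end

section
/- In the self-stabilizing failure detector, suppose that between any two consecutive receptions at processor α of heartbeats from a live processor β, strictly fewer than W heartbeats from other processors are received by α. Then after α's first reception of a heartbeat from β, the counter L_α[β] never reaches W; hence β never appears in the suspect list F_α = {μ : L_α[μ] = W} thereafter. -/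
/-- Self-stabilizing failure detector: if between any two consecutive
receptions at α of heartbeats from the live processor β there are strictly
fewer than W receptions of heartbeats from other processors, then after the
first reception of a heartbeat from β the counter L_α[β] never reaches W, so β
is never suspected thereafter. -/
theorem stmt_19 {Id : Type*} [DecidableEq Id] (W : ℕ) (hW : 0 < W)
    (β : Id) (e : ℕ → Id) (L : ℕ → Id → ℕ)
    (hinit : ∀ μ, L 0 μ ≤ W)
    (hupd : ∀ k μ, L (k + 1) μ =
      if e k = μ then 0 else if L k μ < W then L k μ + 1 else L k μ)
    (hlive : ∀ k, ∃ k' > k, e k' = β)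
    (hinter : ∀ k₁ k₂, k₁ < k₂ → e k₁ = β → e k₂ = β →
      ((Finset.Ioo k₁ k₂).filter (fun j => e j ≠ β)).card < W) :
    ∀ k₀ k, e k₀ = β → k₀ < k → L k β < W := by
  intro k₀ k hk₀ hlt
  classical
  set S := (Finset.range k).filter (fun j => e j = β) with hS
  have hSne : S.Nonempty := ⟨k₀, by simp [hS, hlt, hk₀]⟩
  set m := S.max' hSne with hm
  have hmem : m ∈ S := S.max'_mem hSne
  have hmk : m < k := Finset.mem_range.mp (Finset.mem_filter.mp hmem).1
  have hmβ : e m = β := (Finset.mem_filter.mp hmem).2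
  have hnob : ∀ j, m < j → j < k → e j ≠ β := by
    intro j hj1 hj2 hjβ
    have hjS : j ∈ S := Finset.mem_filter.mpr ⟨Finset.mem_range.mpr hj2, hjβ⟩
    exact absurd (S.le_max' j hjS) (not_le.mpr hj1)
  have key : ∀ n, m < n → n ≤ k →
      L n β ≤ ((Finset.Ioo m n).filter (fun j => e j ≠ β)).card := by
    intro n
    induction n with
    | zero => omega
    | succ n ih =>
      intro h1 h2
      rcases Nat.lt_or_ge m n with hmn | hmn
      · have hb := ih hmn (by omega)
        have hen : e n ≠ β := hnob n hmn (by omega)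
        have heq : (Finset.Ioo m (n+1)).filter (fun j => e j ≠ β)
            = insert n ((Finset.Ioo m n).filter (fun j => e j ≠ β)) := by
          ext x
          simp only [Finset.mem_filter, Finset.mem_Ioo, Finset.mem_insert]
          constructor
          · rintro ⟨⟨hx1, hx2⟩, hx3⟩
            rcases Nat.lt_succ_iff_lt_or_eq.mp hx2 with h | h
            · exact Or.inr ⟨⟨hx1, h⟩, hx3⟩
            · exact Or.inl h
          · rintro (rfl | ⟨⟨hx1, hx2⟩, hx3⟩)
            · exact ⟨⟨hmn, Nat.lt_succ_self _⟩, hen⟩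
            · exact ⟨⟨hx1, by omega⟩, hx3⟩
        rw [heq, Finset.card_insert_of_notMem (by simp), hupd, if_neg hen]
        split_ifs <;> omega
      · have hme : m = n := by omega
        subst hme
        rw [hupd, if_pos hmβ]
        exact Nat.zero_le _
  obtain ⟨k', hk'gt, hk'β⟩ := hlive k
  have hsub : (Finset.Ioo m k).filter (fun j => e j ≠ β)
      ⊆ (Finset.Ioo m k').filter (fun j => e j ≠ β) := by
    intro x hx
    simp only [Finset.mem_filter, Finset.mem_Ioo] at hx ⊢
    exact ⟨⟨hx.1.1, by omega⟩, hx.2⟩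
  have := Finset.card_le_card hsub
  have hcard := hinter m k' (by omega) hmβ hk'β
  have := key k hmk le_rfl
  omega
end
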